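/- Let V be a Klein four subgroup of SO(3). Then the centralizer of V in SO(3) is equal to V itself; in particular, any element of SO(3) that commutes with every element of a ℤ/2 ⊕ ℤ/2 subgroup of SO(3) belongs to that subgroup. -/

import Mathlib

noncomputable section

/-- `SO3` is the group of 3×3 real orthogonal matrices of determinant one,
as a subgroup of the orthogonal group `O(3)`. -/
def SO3 : Subgroup ↥(Matrix.orthogonalGroup (Fin 3) ℝ) where
  carrier := {A | Matrix.det (A : Matrix (Fin 3) (Fin 3) ℝ) = 1}
  one_mem' := by
    simp only [Set.mem_setOf_eq]
    norm_cast
    simp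
  mul_mem' := by
    intro a b ha hb
    simp only [Set.mem_setOf_eq] at *
    push_cast
    rw [Matrix.det_mul, ha, hb, mul_one]
  inv_mem' := by
    intro a ha
    simp only [Set.mem_setOf_eq] at *
    have h : ((a⁻¹ * a : ↥(Matrix.orthogonalGroup (Fin 3) ℝ)) : Matrix (Fin 3) (Fin 3) ℝ)
        = ((1 : ↥(Matrix.orthogonalGroup (Fin 3) ℝ)) : Matrix (Fin 3) (Fin 3) ℝ) := by
      rw [inv_mul_cancel]
    push_cast at h
    have := congrArg Matrix.det h
    rw [Matrix.det_mul, ha, mul_one, Matrix.det_one] at this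
    exact this

open Matrix
namespace KF
abbrev M3 := Matrix (Fin 3) (Fin 3) ℝ

lemma dot_pres {A : M3} (h : Aᵀ * A = 1) (x y : Fin 3 → ℝ) :
    (A *ᵥ x) ⬝ᵥ (A *ᵥ y) = x ⬝ᵥ y := by
  rw [dotProduct_mulVec, ← vecMul_transpose, vecMul_vecMul, h, vecMul_one]

lemma axis_exists {A : M3} (ho : Aᵀ * A = 1) (hd : A.det = 1) :
    ∃ u, u ≠ 0 ∧ A *ᵥ u = u := by
  have key : Aᵀ * (A - 1) = -(A - 1)ᵀ := by
    rw [mul_sub, ho, mul_one, transpose_sub, transpose_one, neg_sub]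
  have h1 : (A - 1).det = 0 := by
    have := congrArg Matrix.det key
    rw [det_mul, det_transpose, hd, one_mul, det_neg, det_transpose] at this
    simp only [Fintype.card_fin] at this
    norm_num at this
    linarith
  obtain ⟨v, hv, hAv⟩ := (exists_mulVec_eq_zero_iff).2 h1
  refine ⟨v, hv, ?_⟩
  have := hAv
  rw [sub_mulVec, one_mulVec, sub_eq_zero] at this
  exact this

lemma matrix_ext_mulVec {A B : M3} (h : ∀ x, A *ᵥ x = B *ᵥ x) : A = B :=
  Matrix.toLin'.injective (LinearMap.ext fun x => by
    rw [Matrix.toLin'_apply, Matrix.toLin'_apply]; exact h x)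

lemma det_eq_of_eigen {A : M3} (u v w : Fin 3 → ℝ)
    (li : LinearIndependent ℝ ![u, v, w]) (l : Fin 3 → ℝ)
    (h0 : A *ᵥ u = l 0 • u) (h1 : A *ᵥ v = l 1 • v) (h2 : A *ᵥ w = l 2 • w) :
    A.det = l 0 * l 1 * l 2 := by
  have hcard : Fintype.card (Fin 3) = Module.finrank ℝ (Fin 3 → ℝ) := by
    simp [Module.finrank_fin_fun]
  let B := basisOfLinearIndependentOfCardEqFinrank li hcard
  have hB : ⇑B = ![u, v, w] := coe_basisOfLinearIndependentOfCardEqFinrank li hcard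
  have hBj : ∀ j, A *ᵥ B j = l j • B j := by
    intro j
    fin_cases j <;> simp [hB] <;> assumption
  have hmat : LinearMap.toMatrix B B (Matrix.mulVecLin A) = Matrix.diagonal l := by
    ext i j
    rw [LinearMap.toMatrix_apply, Matrix.mulVecLin_apply, hBj j, _root_.map_smul, Module.Basis.repr_self]
    rcases eq_or_ne i j with rfl | hij
    · simp [Matrix.diagonal]
    · simp [Matrix.diagonal, hij, Finsupp.single_apply, Ne.symm hij]
  have : (LinearMap.toMatrix B B (Matrix.mulVecLin A)).det = A.det := by
    rw [LinearMap.det_toMatrix]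
    rw [show Matrix.mulVecLin A = Matrix.toLin' A from rfl]; exact LinearMap.det_toLin' A
  rw [hmat] at this
  rw [← this, Matrix.det_diagonal, Fin.prod_univ_three]

/-- fixed space of a nontrivial rotation involution is the line spanned by its axis -/
lemma fix_line {A : M3} (ho : Aᵀ * A = 1) (hd : A.det = 1) (hi : A * A = 1)
    (hne : A ≠ 1) : ∃ u, u ≠ 0 ∧ ∀ x, A *ᵥ x = x ↔ ∃ c : ℝ, x = c • u := by
  obtain ⟨u, hu, hAu⟩ := axis_exists ho hd
  -- a vector negated by A
  obtain ⟨m, hm⟩ : ∃ m, A *ᵥ m ≠ m := by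
    by_contra h
    push_neg at h
    exact hne (matrix_ext_mulVec (fun x => by rw [h, one_mulVec]))
  set z := A *ᵥ m - m with hz
  have hz0 : z ≠ 0 := fun h => hm (by rwa [hz, sub_eq_zero] at h)
  have hAz : A *ᵥ z = -z := by
    rw [hz, mulVec_sub, mulVec_mulVec, hi, one_mulVec, neg_sub]
  refine ⟨u, hu, fun x => ⟨fun hx => ?_, fun ⟨c, hc⟩ => by
    rw [hc, mulVec_smul, hAu]⟩⟩
  by_contra hnc
  push_neg at hnc
  -- u, x, z are linearly independent eigenvectors with eigenvalues 1, 1, -1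
  have li : LinearIndependent ℝ ![u, x, z] := by
    rw [Fintype.linearIndependent_iff]
    intro g hg
    have hg' : g 0 • u + g 1 • x + g 2 • z = 0 := by
      rw [Fin.sum_univ_three] at hg; simpa using hg
    have hg2 : A *ᵥ (g 0 • u + g 1 • x + g 2 • z) = 0 := by rw [hg']; simp
    rw [mulVec_add, mulVec_add, mulVec_smul, mulVec_smul, mulVec_smul, hAu, hx,
      hAz] at hg2
    have h2 : g 2 • z = 0 := by
      have := sub_eq_zero.mpr (hg'.trans hg2.symm)
      rw [smul_neg] at this
      have : (2 : ℝ) • g 2 • z = 0 := by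
        rw [two_smul]
        linear_combination (norm := module) this
      rcases smul_eq_zero.1 this with h | h
      · norm_num at h
      · exact h
    rcases smul_eq_zero.1 h2 with h | h
    · have h1 : g 0 • u + g 1 • x = 0 := by
        rw [h, zero_smul, add_zero] at hg'; exact hg'
      have hg1 : g 1 = 0 := by
        by_contra hg1
        refine hnc (-g 0 / g 1) ?_
        have h1' : g 1 • x = (-g 0) • u := by
          linear_combination (norm := module) h1
        calc x = (g 1)⁻¹ • (g 1 • x) := by
              rw [smul_smul, inv_mul_cancel₀ hg1, one_smul]
          _ = (-g 0 / g 1) • u := by rw [h1', smul_smul, div_eq_inv_mul, mul_comm]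
      have hg0 : g 0 = 0 := by
        rw [hg1, zero_smul, add_zero, smul_eq_zero] at h1
        tauto
      intro i; fin_cases i <;> assumption
    · exact absurd h hz0
  have := det_eq_of_eigen u x z li ![1, 1, -1] (by simpa using hAu)
    (by simpa using hx) (by simpa using hAz)
  rw [hd] at this
  norm_num [show (![1, 1, -1] : Fin 3 → ℝ) 2 = -1 from rfl] at this

lemma formula_of_axis {A : M3} (ho : Aᵀ * A = 1) (hi : A * A = 1)
    {u : Fin 3 → ℝ} (hu : u ≠ 0)
    (hA : ∀ x, A *ᵥ x = x ↔ ∃ c : ℝ, x = c • u) (x : Fin 3 → ℝ) :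
    A *ᵥ x = (2 * (x ⬝ᵥ u) / (u ⬝ᵥ u)) • u - x := by
  have huu : u ⬝ᵥ u ≠ 0 := fun h => hu ((dotProduct_self_eq_zero).1 h)
  have hAu : A *ᵥ u = u := (hA u).2 ⟨1, (one_smul _ _).symm⟩
  have hfix : A *ᵥ (A *ᵥ x + x) = A *ᵥ x + x := by
    rw [mulVec_add, mulVec_mulVec, hi, one_mulVec, add_comm]
  obtain ⟨c, hc⟩ := (hA _).1 hfix
  have hdot : (A *ᵥ x + x) ⬝ᵥ u = c * (u ⬝ᵥ u) := by
    rw [hc, smul_dotProduct, smul_eq_mul]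
  have hAxu : (A *ᵥ x) ⬝ᵥ u = x ⬝ᵥ u := by
    conv_lhs => rw [← hAu]
    exact dot_pres ho x u
  rw [add_dotProduct, hAxu] at hdot
  have hcval : c = 2 * (x ⬝ᵥ u) / (u ⬝ᵥ u) := by
    rw [eq_div_iff huu]
    linarith
  rw [← hcval, ← hc]
  abel

lemma eq_of_same_axis {A B : M3} (hoA : Aᵀ * A = 1) (hiA : A * A = 1)
    (hoB : Bᵀ * B = 1) (hiB : B * B = 1) {u : Fin 3 → ℝ} (hu : u ≠ 0)
    (hA : ∀ x, A *ᵥ x = x ↔ ∃ c : ℝ, x = c • u)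
    (hB : ∀ x, B *ᵥ x = x ↔ ∃ c : ℝ, x = c • u) : A = B :=
  matrix_ext_mulVec fun x => by
    rw [formula_of_axis hoA hiA hu hA x, formula_of_axis hoB hiB hu hB x]

lemma comm_eigen {P Q : M3} {x : Fin 3 → ℝ}
    (hP : ∀ y, P *ᵥ y = y ↔ ∃ c : ℝ, y = c • x) (hcomm : Q * P = P * Q) :
    ∃ c : ℝ, Q *ᵥ x = c • x := by
  have hPx : P *ᵥ x = x := (hP x).2 ⟨1, (one_smul _ _).symm⟩
  have : P *ᵥ (Q *ᵥ x) = Q *ᵥ x := by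
    rw [mulVec_mulVec, ← hcomm, ← mulVec_mulVec, hPx]
  exact (hP _).1 this

lemma sign_pm {Q : M3} (ho : Qᵀ * Q = 1) {x : Fin 3 → ℝ} {c : ℝ} (hx : x ≠ 0)
    (h : Q *ᵥ x = c • x) : c = 1 ∨ c = -1 := by
  have hxx : x ⬝ᵥ x ≠ 0 := fun h0 => hx (dotProduct_self_eq_zero.1 h0)
  have := dot_pres ho x x
  rw [h, smul_dotProduct, dotProduct_smul, smul_eq_mul, smul_eq_mul] at this
  have hc2 : c * c = 1 :=
    mul_right_cancel₀ hxx (by rw [one_mul, mul_assoc]; exact this)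
  exact mul_self_eq_one_iff.1 hc2

lemma span_transport {u v : Fin 3 → ℝ} {d : ℝ} (hd : d ≠ 0) (hv : v = d • u)
    (x : Fin 3 → ℝ) : (∃ c : ℝ, x = c • v) ↔ (∃ c : ℝ, x = c • u) := by
  constructor
  · rintro ⟨c, rfl⟩; exact ⟨c * d, by rw [hv, smul_smul]⟩
  · rintro ⟨c, rfl⟩
    exact ⟨c / d, by rw [hv, smul_smul, div_mul_cancel₀ _ hd]⟩

lemma neg_eigen {P Q : M3} {x : Fin 3 → ℝ} (hx : x ≠ 0)
    (hoP : Pᵀ * P = 1) (hiP : P * P = 1) (hoQ : Qᵀ * Q = 1) (hiQ : Q * Q = 1)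
    (hP : ∀ y, P *ᵥ y = y ↔ ∃ c : ℝ, y = c • x)
    {z : Fin 3 → ℝ} (hz : z ≠ 0)
    (hQ : ∀ y, Q *ᵥ y = y ↔ ∃ c : ℝ, y = c • z)
    (hcomm : Q * P = P * Q) (hPQ : P ≠ Q) : Q *ᵥ x = -x := by
  obtain ⟨c, hc⟩ := comm_eigen hP hcomm
  rcases sign_pm hoQ hx hc with h1 | h1
  · exfalso
    rw [h1, one_smul] at hc
    obtain ⟨d, hd⟩ := (hQ x).1 hc
    have hd0 : d ≠ 0 := fun h0 => hx (by rw [hd, h0, zero_smul])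
    have hP' : ∀ y, P *ᵥ y = y ↔ ∃ c : ℝ, y = c • z := by
      intro y
      rw [hP y, span_transport hd0 hd y]
    exact hPQ (eq_of_same_axis hoP hiP hoQ hiQ hz hP' hQ)
  · rw [h1, neg_one_smul] at hc; exact hc

theorem main_matrix {A B G : M3}
    (hoA : Aᵀ * A = 1) (hdA : A.det = 1) (hiA : A * A = 1) (hA1 : A ≠ 1)
    (hoB : Bᵀ * B = 1) (hdB : B.det = 1) (hiB : B * B = 1) (hB1 : B ≠ 1)
    (hAB : A ≠ B) (hcomm : A * B = B * A)
    (hoG : Gᵀ * G = 1) (hdG : G.det = 1)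
    (hGA : G * A = A * G) (hGB : G * B = B * G) :
    G = 1 ∨ G = A ∨ G = B ∨ G = A * B := by
  obtain ⟨C, hC⟩ : ∃ C : M3, C = A * B := ⟨A * B, rfl⟩
  have hoC : Cᵀ * C = 1 := by
    rw [hC, transpose_mul]
    calc Bᵀ * Aᵀ * (A * B) = Bᵀ * (Aᵀ * A) * B := by noncomm_ring
      _ = 1 := by rw [hoA, mul_one, hoB]
  have hdC : C.det = 1 := by rw [hC, det_mul, hdA, hdB, mul_one]
  have hiC : C * C = 1 := by
    calc C * C = A * (B * A) * B := by rw [hC]; noncomm_ring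
      _ = A * (A * B) * B := by rw [hcomm]
      _ = (A * A) * (B * B) := by noncomm_ring
      _ = 1 := by rw [hiA, hiB, mul_one]
  have hC1 : C ≠ 1 := by
    intro h
    apply hAB
    have h2 : A * (A * B) = A := by rw [← hC, h, mul_one]
    rw [← mul_assoc, hiA, one_mul] at h2
    exact h2.symm
  have hAC : A ≠ C := by
    intro h
    apply hB1
    calc B = (A * A) * B := by rw [hiA, one_mul]
      _ = A * (A * B) := by noncomm_ring
      _ = A * A := by rw [← hC, ← h]
      _ = 1 := hiA
  have hBC : B ≠ C := by
    intro h
    apply hA1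
    calc A = A * (B * B) := by rw [hiB, mul_one]
      _ = (A * B) * B := by noncomm_ring
      _ = B * B := by rw [← hC, ← h]
      _ = 1 := hiB
  have hACc : A * C = C * A := by
    rw [hC]
    calc A * (A * B) = A * (B * A) := by rw [hcomm]
      _ = (A * B) * A := by noncomm_ring
  have hBCc : B * C = C * B := by
    rw [hC]
    calc B * (A * B) = (B * A) * B := by noncomm_ring
      _ = (A * B) * B := by rw [← hcomm]
  have hGC : G * C = C * G := by
    rw [hC]
    calc G * (A * B) = (G * A) * B := by noncomm_ring
      _ = A * (G * B) := by rw [hGA]; noncomm_ring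
      _ = A * (B * G) := by rw [hGB]
      _ = (A * B) * G := by noncomm_ring
  obtain ⟨u, hu, hAfix⟩ := fix_line hoA hdA hiA hA1
  obtain ⟨v, hv, hBfix⟩ := fix_line hoB hdB hiB hB1
  obtain ⟨w, hw, hCfix⟩ := fix_line hoC hdC hiC hC1
  have hAu : A *ᵥ u = u := (hAfix u).2 ⟨1, (one_smul _ _).symm⟩
  have hBv : B *ᵥ v = v := (hBfix v).2 ⟨1, (one_smul _ _).symm⟩
  have hCw : C *ᵥ w = w := (hCfix w).2 ⟨1, (one_smul _ _).symm⟩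
  have hBu : B *ᵥ u = -u :=
    neg_eigen hu hoA hiA hoB hiB hAfix hv hBfix hcomm.symm hAB
  have hAv : A *ᵥ v = -v :=
    neg_eigen hv hoB hiB hoA hiA hBfix hu hAfix hcomm hAB.symm
  have hAw : A *ᵥ w = -w :=
    neg_eigen hw hoC hiC hoA hiA hCfix hu hAfix hACc hAC.symm
  have hBw : B *ᵥ w = -w :=
    neg_eigen hw hoC hiC hoB hiB hCfix hv hBfix hBCc hBC.symm
  have hCu : C *ᵥ u = -u := by
    rw [hC, ← mulVec_mulVec, hBu, mulVec_neg, hAu]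
  have hCv : C *ᵥ v = -v := by
    rw [hC, ← mulVec_mulVec, hBv, hAv]
  have li : LinearIndependent ℝ ![u, v, w] := by
    rw [Fintype.linearIndependent_iff]
    intro g hg
    have hS : g 0 • u + g 1 • v + g 2 • w = 0 := by
      rw [Fin.sum_univ_three] at hg; simpa using hg
    have hS' : g 0 • u - g 1 • v - g 2 • w = 0 := by
      have := congrArg (fun y => A *ᵥ y) hS
      simp only [mulVec_add, mulVec_smul, hAu, hAv, hAw, mulVec_zero,
        smul_neg] at this
      linear_combination (norm := module) this
    have hg0 : g 0 = 0 := by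
      have h2 : (2 : ℝ) • g 0 • u = 0 := by
        rw [two_smul]; linear_combination (norm := module) hS + hS'
      rcases smul_eq_zero.1 h2 with h | h
      · norm_num at h
      · rcases smul_eq_zero.1 h with h | h
        · exact h
        · exact absurd h hu
    have hT : g 1 • v + g 2 • w = 0 := by
      rw [hg0, zero_smul, zero_add] at hS; exact hS
    have hT' : g 1 • v - g 2 • w = 0 := by
      have := congrArg (fun y => B *ᵥ y) hT
      simp only [mulVec_add, mulVec_smul, hBv, hBw, mulVec_zero, smul_neg] at this
      linear_combination (norm := module) this
    have hg1 : g 1 = 0 := by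
      have h2 : (2 : ℝ) • g 1 • v = 0 := by
        rw [two_smul]; linear_combination (norm := module) hT + hT'
      rcases smul_eq_zero.1 h2 with h | h
      · norm_num at h
      · rcases smul_eq_zero.1 h with h | h
        · exact h
        · exact absurd h hv
    have hg2 : g 2 = 0 := by
      rw [hg1, zero_smul, zero_add, smul_eq_zero] at hT
      tauto
    intro i; fin_cases i <;> assumption
  obtain ⟨α, hα⟩ := comm_eigen hAfix hGA
  obtain ⟨β, hβ⟩ := comm_eigen hBfix hGB
  obtain ⟨γ, hγ⟩ := comm_eigen hCfix hGC
  have hdet : G.det = α * β * γ := by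
    apply det_eq_of_eigen u v w li ![α, β, γ] <;> simpa
  rw [hdG] at hdet
  have hα' := sign_pm hoG hu hα
  have hβ' := sign_pm hoG hv hβ
  have hγ' := sign_pm hoG hw hγ
  have key : ∀ M : M3, M *ᵥ u = G *ᵥ u → M *ᵥ v = G *ᵥ v → M *ᵥ w = G *ᵥ w →
      G = M := by
    intro M h0 h1 h2
    have hcard : Fintype.card (Fin 3) = Module.finrank ℝ (Fin 3 → ℝ) := by
      simp [Module.finrank_fin_fun]
    have hB3 := coe_basisOfLinearIndependentOfCardEqFinrank li hcard
    refine (Matrix.toLin'.injective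
      (Module.Basis.ext (basisOfLinearIndependentOfCardEqFinrank li hcard) fun i => ?_)).symm
    fin_cases i <;>
      simp only [hB3, Matrix.toLin'_apply, Fin.isValue, Matrix.cons_val_zero,
        Matrix.cons_val_one, Matrix.head_cons, Matrix.cons_val_two,
        Matrix.tail_cons] <;>
      [exact h0; exact h1; exact h2]
  rcases hα' with rfl | rfl <;> rcases hβ' with rfl | rfl <;>
      rcases hγ' with rfl | rfl
  · left
    exact key 1 (by rw [one_mulVec, hα, one_smul]) (by rw [one_mulVec, hβ, one_smul])
      (by rw [one_mulVec, hγ, one_smul])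
  · norm_num at hdet
  · norm_num at hdet
  · right; left
    exact key A (by rw [hAu, hα, one_smul]) (by rw [hAv, hβ, neg_one_smul])
      (by rw [hAw, hγ, neg_one_smul])
  · norm_num at hdet
  · right; right; left
    exact key B (by rw [hBu, hα, neg_one_smul]) (by rw [hBv, hβ, one_smul])
      (by rw [hBw, hγ, neg_one_smul])
  · right; right; right
    rw [← hC]
    exact key C (by rw [hCu, hα, neg_one_smul]) (by rw [hCv, hβ, neg_one_smul])
      (by rw [hCw, hγ, one_smul])
  · norm_num at hdet

def mSO (z : ↥SO3) : M3 := z.1.1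

lemma mSO_mul (x y : ↥SO3) : mSO (x * y) = mSO x * mSO y := rfl

lemma mSO_one : mSO 1 = 1 := rfl

lemma mSO_orth (x : ↥SO3) : (mSO x)ᵀ * mSO x = 1 := by
  have h := x.1.2
  rw [Matrix.mem_orthogonalGroup_iff] at h
  have h2 : star (mSO x) = (mSO x)ᵀ := rfl
  rw [← h2]
  exact mul_eq_one_comm.1 h

lemma mSO_det (x : ↥SO3) : (mSO x).det = 1 := x.2

lemma mSO_inj {x y : ↥SO3} (h : mSO x = mSO y) : x = y :=
  Subtype.ext (Subtype.ext h)

end KF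


/-- The centralizer of a Klein four subgroup of `SO(3)` is the subgroup itself; in particular
every element of `SO(3)` commuting with all elements of such a subgroup belongs to it. -/
theorem klein_four_centralizer (V : Subgroup ↥SO3) (hV : IsKleinFour ↥V) :
    Subgroup.centralizer (V : Set ↥SO3) = V ∧
    ∀ g : ↥SO3, (∀ v ∈ V, g * v = v * g) → g ∈ V := by
  classical
  have hsq : ∀ x : ↥V, x * x = 1 := fun x => by
    have h := Monoid.pow_exponent_eq_one x
    rwa [hV.exponent_two, pow_two] at h
  have hcomm : ∀ x y : ↥V, x * y = y * x := fun x y => by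
    have hinv : ∀ z : ↥V, z⁻¹ = z := fun z => inv_eq_of_mul_eq_one_left (hsq z)
    have h := hinv (x * y)
    rw [_root_.mul_inv_rev, hinv, hinv] at h
    exact h.symm
  have main : ∀ g : ↥SO3, (∀ v ∈ V, g * v = v * g) → g ∈ V := by
    intro g hg
    haveI : Finite ↥V := Nat.finite_of_card_ne_zero (by rw [hV.card_four]; norm_num)
    haveI := Fintype.ofFinite ↥V
    have hc4 : Fintype.card ↥V = 4 := by rw [← Nat.card_eq_fintype_card, hV.card_four]
    obtain ⟨a, ha1⟩ := Fintype.exists_ne_of_one_lt_card (by omega) (1 : ↥V)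
    obtain ⟨b, hb1, hba⟩ : ∃ b : ↥V, b ≠ 1 ∧ b ≠ a := by
      by_contra h
      push_neg at h
      have hsub : (Finset.univ : Finset ↥V) ⊆ {1, a} := by
        intro z _
        by_cases hz : z = 1
        · simp [hz]
        · simp [h z hz]
      have h1 := Finset.card_le_card hsub
      have h2 : ({1, a} : Finset ↥V).card ≤ 2 :=
        (Finset.card_insert_le _ _).trans (by simp)
      rw [Finset.card_univ, hc4] at h1
      omega
    have hsqSO : ∀ x : ↥V, KF.mSO (x : ↥SO3) * KF.mSO (x : ↥SO3) = 1 := by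
      intro x
      have h := congrArg (fun z : ↥V => KF.mSO (z : ↥SO3)) (hsq x)
      simpa [KF.mSO_mul, KF.mSO_one] using h
    have hne1 : ∀ x : ↥V, x ≠ 1 → KF.mSO (x : ↥SO3) ≠ 1 := by
      intro x hx h
      exact hx (Subtype.ext (KF.mSO_inj (h.trans KF.mSO_one.symm)))
    have hABne : KF.mSO (a : ↥SO3) ≠ KF.mSO (b : ↥SO3) := by
      intro h
      exact hba (Subtype.ext (KF.mSO_inj h)).symm
    have hABcomm : KF.mSO (a : ↥SO3) * KF.mSO (b : ↥SO3)
        = KF.mSO (b : ↥SO3) * KF.mSO (a : ↥SO3) := by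
      have h := congrArg (fun z : ↥V => KF.mSO (z : ↥SO3)) (hcomm a b)
      simpa [KF.mSO_mul] using h
    have hGA : KF.mSO g * KF.mSO (a : ↥SO3) = KF.mSO (a : ↥SO3) * KF.mSO g := by
      have h := congrArg KF.mSO (hg (a : ↥SO3) a.2)
      simpa [KF.mSO_mul] using h
    have hGB : KF.mSO g * KF.mSO (b : ↥SO3) = KF.mSO (b : ↥SO3) * KF.mSO g := by
      have h := congrArg KF.mSO (hg (b : ↥SO3) b.2)
      simpa [KF.mSO_mul] using h
    rcases KF.main_matrix (KF.mSO_orth _) (KF.mSO_det _) (hsqSO a) (hne1 a ha1)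
        (KF.mSO_orth _) (KF.mSO_det _) (hsqSO b) (hne1 b hb1)
        hABne hABcomm (KF.mSO_orth g) (KF.mSO_det g) hGA hGB with h | h | h | h
    · have : g = 1 := KF.mSO_inj (h.trans KF.mSO_one.symm)
      rw [this]; exact one_mem V
    · have : g = (a : ↥SO3) := KF.mSO_inj h
      rw [this]; exact a.2
    · have : g = (b : ↥SO3) := KF.mSO_inj h
      rw [this]; exact b.2
    · have : g = (a : ↥SO3) * (b : ↥SO3) :=
        KF.mSO_inj (h.trans (KF.mSO_mul _ _).symm)
      rw [this]; exact mul_mem a.2 b.2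
  refine ⟨?_, main⟩
  ext g
  constructor
  · intro hg
    exact main g fun v hv => (Subgroup.mem_centralizer_iff.1 hg v hv).symm
  · intro hg
    rw [Subgroup.mem_centralizer_iff]
    intro h hh
    exact congrArg Subtype.val (hcomm ⟨h, hh⟩ ⟨g, hg⟩)
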